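/- Let c, M, T > 0 with √(6M/c) < T. Then the infimum of ψ(M,a,s) = (M + (1/2)c s² − a s)²/((2/3)s³) + 2ac over a ≥ 0, s ∈ (0,T] is attained at a = 0 and s = √(6M/c). -/

import Mathlib

/-- The function `ψ(M,a,s) = (M + (1/2)c s² − a s)²/((2/3) s³) + 2ac`. -/
noncomputable def psi (c M a s : ℝ) : ℝ :=
  (M + (1 / 2) * c * s ^ 2 - a * s) ^ 2 / ((2 / 3) * s ^ 3) + 2 * a * c

/-- If `√(6M/c) < T`, the infimum of `ψ(M,a,s)` over `a ≥ 0`, `s ∈ (0,T]` is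
attained at `a = 0`, `s = √(6M/c)`. -/
theorem inf_psi_attained_interior (c M T : ℝ) (hc : 0 < c) (hM : 0 < M) (hT : 0 < T)
    (h : Real.sqrt (6 * M / c) < T) :
    Real.sqrt (6 * M / c) ∈ Set.Ioc (0 : ℝ) T ∧
      ∀ a ∈ Set.Ici (0 : ℝ), ∀ s ∈ Set.Ioc (0 : ℝ) T,
        psi c M 0 (Real.sqrt (6 * M / c)) ≤ psi c M a s := by
  set r := Real.sqrt (6 * M / c) with hr
  have hr0 : 0 < r := Real.sqrt_pos.mpr (by positivity)
  have hr2 : r ^ 2 = 6 * M / c := Real.sq_sqrt (by positivity)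
  have hrne : r ≠ 0 := ne_of_gt hr0
  have hcne : c ≠ 0 := ne_of_gt hc
  refine ⟨⟨hr0, h.le⟩, ?_⟩
  intro a _ s hs
  have hs0 : 0 < s := hs.1
  have hsne : s ≠ 0 := ne_of_gt hs0
  have h1 : psi c M 0 r = 4 * M * c / r := by
    rw [psi]
    rw [show r ^ 3 = (6 * M / c) * r by rw [pow_succ, hr2], show (1:ℝ)/2 * c * r ^ 2
      = 3 * M by rw [hr2]; field_simp; ring]
    field_simp
    ring
  have h2 : psi c M a s - 4 * M * c / r =
      (3 / (2 * s)) * (a - M / s + c * s / 6) ^ 2 + (c ^ 2 / (3 * s)) * (s - r) ^ 2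
        + (2 * c ^ 2 / 3 * r - 4 * M * c / r) := by
    have hr2' : c * r ^ 2 = 6 * M := by rw [hr2]; field_simp
    rw [psi]; field_simp; linear_combination (-288 * c * s^2 * r) * hr2'
  have h3 : 2 * c ^ 2 / 3 * r - 4 * M * c / r = 0 := by
    have : (2 * c ^ 2 / 3 * r - 4 * M * c / r) * r = 0 := by
      have : (2 * c ^ 2 / 3 * r - 4 * M * c / r) * r
          = 2 * c ^ 2 / 3 * r ^ 2 - 4 * M * c := by field_simp
      rw [this, hr2]; field_simp; ring
    rcases mul_eq_zero.mp this with h' | h'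
    · exact h'
    · exact absurd h' hrne
  rw [h1]
  have e1 : (0:ℝ) ≤ (3 / (2 * s)) * (a - M / s + c * s / 6) ^ 2 := by positivity
  have e2 : (0:ℝ) ≤ (c ^ 2 / (3 * s)) * (s - r) ^ 2 := by positivity
  linarith [h2, h3]
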